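/- For positive constants k₂, h, α, l, L, k with L > l, the eigenvalue equation -（k₂/h)x = (tan(αlx) + kα tan((L-l)x))/(kα - tan(αlx)tan((L-l)x)) has infinitely many positive solutions; that is, the set of x > 0 satisfying the equation (where both sides are defined) is infinite. -/

import Mathlib

set_option maxHeartbeats 1000000
open Real Set

noncomputable def Hfun (u v m c : ℝ) (x : ℝ) : ℝ :=
  Real.sin (u*x) * Real.cos (v*x) + m * (Real.cos (u*x) * Real.sin (v*x))
    + c * x * (m * (Real.cos (u*x) * Real.cos (v*x)) - Real.sin (u*x) * Real.sin (v*x))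

lemma arctan_lt_self' {x : ℝ} (hx : 0 < x) : Real.arctan x < x := by
  have h1 : 0 < Real.arctan x := by
    have := Real.arctan_strictMono hx
    rwa [Real.arctan_zero] at this
  have := Real.lt_tan h1 (Real.arctan_lt_pi_div_two x)
  rwa [Real.tan_arctan] at this

lemma arctan_pos' {x : ℝ} (hx : 0 < x) : 0 < Real.arctan x := by
  have := Real.arctan_strictMono hx
  rwa [Real.arctan_zero] at this
lemma good_zero (u v m c z : ℝ) (hm : 0 < m) (hz : Hfun u v m c z = 0)
    (h1 : Real.cos (u*z) ≠ 0) (h2 : Real.cos (v*z) ≠ 0) :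
    m - Real.tan (u*z) * Real.tan (v*z) ≠ 0 ∧
      -c * z = (Real.tan (u*z) + m * Real.tan (v*z)) /
        (m - Real.tan (u*z) * Real.tan (v*z)) := by
  unfold Hfun at hz
  rw [Real.tan_eq_sin_div_cos, Real.tan_eq_sin_div_cos]
  set s1 := Real.sin (u*z); set c1 := Real.cos (u*z)
  set s2 := Real.sin (v*z); set c2 := Real.cos (v*z)
  have key : (s1*c2 + m*(c1*s2)) + c*z*(m*(c1*c2) - s1*s2) = 0 := by linarith
  have hd : m - s1/c1 * (s2/c2) ≠ 0 := by
    intro hd0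
    have hmeq : m * (c1*c2) = s1*s2 := by field_simp at hd0; linarith
    have hzz : m*(c1*c2) - s1*s2 = 0 := by linarith
    have hnum : s1*c2 + m*(c1*s2) = 0 := by linear_combination key - c*z*hzz
    have hc1 : m * c1 * (c2^2 + s2^2) = 0 := by linear_combination c2*hzz + s2*hnum
    rw [show c2^2 + s2^2 = 1 from by rw [add_comm]; exact Real.sin_sq_add_cos_sq (v*z)] at hc1
    simp at hc1
    rcases hc1 with h | h
    · exact absurd h (ne_of_gt hm)
    · exact h1 h
  refine ⟨hd, ?_⟩
  rw [eq_div_iff hd]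
  field_simp
  linear_combination (-1)*key
lemma cong_of_tan {y t : ℝ} (ht : 0 < t) (hkey : Real.cos y - t*Real.sin y = 0)
    (hs : Real.sin y ≠ 0) : ∃ K : ℤ, y = K*π + Real.arctan (1/t) := by
  have ht' : t ≠ 0 := ne_of_gt ht
  have hsin0 : Real.sin (y - Real.arctan (1/t)) = 0 := by
    rw [Real.sin_sub, Real.sin_arctan, Real.cos_arctan]
    have hsq : Real.sqrt (1 + (1/t)^2) ≠ 0 := by positivity
    field_simp
    linarith [hkey]
  obtain ⟨K, hK⟩ := Real.sin_eq_zero_iff.mp hsin0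
  exact ⟨K, by linarith [hK]⟩

lemma bad_u (u v m c z : ℝ) (hcz : 0 < c*z) (hz : Hfun u v m c z = 0)
    (h1 : Real.cos (u*z) = 0) :
    ∃ K : ℤ, v*z = K*π + Real.arctan (1/(c*z)) := by
  unfold Hfun at hz
  rw [h1] at hz
  have hpy := Real.sin_sq_add_cos_sq (u*z)
  rw [h1] at hpy
  have hs1 : Real.sin (u*z) ≠ 0 := by
    intro h; rw [h] at hpy; norm_num at hpy
  have hkey : Real.cos (v*z) - (c*z)*Real.sin (v*z) = 0 := by
    have : Real.sin (u*z) * (Real.cos (v*z) - (c*z)*Real.sin (v*z)) = 0 := by linarith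
    rcases mul_eq_zero.mp this with h | h
    · exact absurd h hs1
    · exact h
  have hs2 : Real.sin (v*z) ≠ 0 := by
    intro h
    have hc2 : Real.cos (v*z) = 0 := by rw [h] at hkey; linarith
    have := Real.sin_sq_add_cos_sq (v*z)
    rw [h, hc2] at this; norm_num at this
  exact cong_of_tan hcz hkey hs2

lemma bad_v (u v m c z : ℝ) (hcz : 0 < c*z) (hm : 0 < m) (hz : Hfun u v m c z = 0)
    (h2 : Real.cos (v*z) = 0) :
    ∃ K : ℤ, u*z = K*π + Real.arctan (m/(c*z)) := by
  unfold Hfun at hz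
  rw [h2] at hz
  have hpy := Real.sin_sq_add_cos_sq (v*z)
  rw [h2] at hpy
  have hs2 : Real.sin (v*z) ≠ 0 := by
    intro h; rw [h] at hpy; norm_num at hpy
  have hkey0 : m * Real.cos (u*z) - (c*z)*Real.sin (u*z) = 0 := by
    have : Real.sin (v*z) * (m * Real.cos (u*z) - (c*z)*Real.sin (u*z)) = 0 := by linarith
    rcases mul_eq_zero.mp this with h | h
    · exact absurd h hs2
    · exact h
  have hs1 : Real.sin (u*z) ≠ 0 := by
    intro h
    have hc1 : Real.cos (u*z) = 0 := by
      rw [h] at hkey0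
      have : m * Real.cos (u*z) = 0 := by linarith
      rcases mul_eq_zero.mp this with hh | hh
      · exact absurd hh (ne_of_gt hm)
      · exact hh
    have := Real.sin_sq_add_cos_sq (u*z)
    rw [h, hc1] at this; norm_num at this
  have hcm : 0 < c*z/m := by positivity
  have hkey : Real.cos (u*z) - (c*z/m)*Real.sin (u*z) = 0 := by
    field_simp
    linarith [hkey0]
  obtain ⟨K, hK⟩ := cong_of_tan hcm hkey hs1
  refine ⟨K, ?_⟩
  rw [one_div_div] at hK
  exact hK
lemma ivt_zero (u v m c : ℝ) (hu : 0 < u) (hv : 0 < v) (hm : 0 < m) (hc : 0 < c)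
    (n : ℕ) (hbig : (1+m) < c * (2*n*π/(u+v)) * min m 1) :
    ∃ z ∈ Set.Ioo (2*n*π/(u+v)) ((2*n+1)*π/(u+v)), Hfun u v m c z = 0 := by
  have hπ := Real.pi_pos
  have hw : 0 < u + v := by linarith
  set a := 2*n*π/(u+v) with ha_def
  set b := (2*n+1)*π/(u+v) with hb_def
  have hm1 : 0 < min m 1 := lt_min hm one_pos
  have ha : 0 < a := by
    nlinarith [mul_pos hc hm1]
  have hb : a < b := by
    rw [ha_def, hb_def, div_lt_div_iff₀ hw hw]
    nlinarith
  have hcb : c * a * min m 1 ≤ c * b * min m 1 := by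
    have : c * a ≤ c * b := by nlinarith
    nlinarith
  -- endpoint identities
  have hwa : v * a = 2*n*π - u*a := by
    have : (u+v) * a = 2*n*π := by
      rw [ha_def]; field_simp
    linarith
  have hwb : v * b = (2*n+1)*π - u*b := by
    have : (u+v) * b = (2*n+1)*π := by
      rw [hb_def]; field_simp
    linarith
  clear_value a b
  have hc2n : Real.cos (2*n*π) = 1 := by
    have := Real.cos_nat_mul_two_pi n
    convert this using 2; push_cast; ring
  have hs2n : Real.sin (2*n*π) = 0 := by
    have := Real.sin_nat_mul_pi (2*n)
    convert this using 2; push_cast; ring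
  have hc2n1 : Real.cos ((2*n+1)*π) = -1 := by
    rw [show (2*(n:ℝ)+1)*π = 2*n*π + π by ring, Real.cos_add, hc2n, hs2n]; simp
  have hs2n1 : Real.sin ((2*n+1)*π) = 0 := by
    rw [show ((2*n+1):ℝ)*π = 2*n*π + π by ring, Real.sin_add, hs2n, hc2n]; simp
  -- values at endpoints
  have hcva : Real.cos (v*a) = Real.cos (u*a) := by
    rw [hwa, Real.cos_sub, hc2n, hs2n]; ring
  have hsva : Real.sin (v*a) = -Real.sin (u*a) := by
    rw [hwa, Real.sin_sub, hc2n, hs2n]; ring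
  have hcvb : Real.cos (v*b) = -Real.cos (u*b) := by
    rw [hwb, Real.cos_sub, hc2n1, hs2n1]; ring
  have hsvb : Real.sin (v*b) = Real.sin (u*b) := by
    rw [hwb, Real.sin_sub, hc2n1, hs2n1]; ring
  have hpya := Real.sin_sq_add_cos_sq (u*a)
  have hpyb := Real.sin_sq_add_cos_sq (u*b)
  set s := Real.sin (u*a); set co := Real.cos (u*a)
  set s' := Real.sin (u*b); set co' := Real.cos (u*b)
  have hHa : Hfun u v m c a = (1-m)*(s*co) + c*a*(m*co^2 + s^2) := by
    unfold Hfun; rw [hcva, hsva]; ring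
  have hHb : Hfun u v m c b = (m-1)*(s'*co') - c*b*(m*co'^2 + s'^2) := by
    unfold Hfun; rw [hcvb, hsvb]; ring
  have hbound1 : m*co^2 + s^2 ≥ min m 1 := by
    rcases le_total m 1 with h | h
    · rw [min_eq_left h]; nlinarith [sq_nonneg s, sq_nonneg co]
    · rw [min_eq_right h]; nlinarith [sq_nonneg s, sq_nonneg co]
  have hbound1' : m*co'^2 + s'^2 ≥ min m 1 := by
    rcases le_total m 1 with h | h
    · rw [min_eq_left h]; nlinarith [sq_nonneg s', sq_nonneg co']
    · rw [min_eq_right h]; nlinarith [sq_nonneg s', sq_nonneg co']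
  have hsc : (1-m)*(s*co) ≥ -(1+m) := by
    nlinarith [sq_nonneg (s+co), mul_nonneg hm.le (sq_nonneg (s-co))]
  have hsc' : (m-1)*(s'*co') ≤ (1+m) := by
    nlinarith [sq_nonneg (s'-co'), mul_nonneg hm.le (sq_nonneg (s'+co'))]
  have hApos : 0 < Hfun u v m c a := by
    have h2 := mul_le_mul_of_nonneg_left hbound1 (mul_pos hc ha).le
    rw [hHa]; linarith [h2, hsc, hbig]
  have hBneg : Hfun u v m c b < 0 := by
    have h2 := mul_le_mul_of_nonneg_left hbound1' (mul_pos hc (lt_trans ha hb)).le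
    rw [hHb]; linarith [h2, hsc', hbig, hcb]
  have hcont : ContinuousOn (Hfun u v m c) (Set.Icc a b) := by
    apply Continuous.continuousOn; unfold Hfun; fun_prop
  have := intermediate_value_Ioo' hb.le hcont
  have h0 : (0:ℝ) ∈ Set.Ioo (Hfun u v m c b) (Hfun u v m c a) := ⟨hBneg, hApos⟩
  obtain ⟨z, hz1, hz2⟩ := this h0
  exact ⟨z, hz1, hz2⟩

lemma jump_bound {Ej G X O O' : ℝ} (hE : Ej*Real.pi = G - O' + O)
    (hG1 : 0 < G) (hG2 : G < X*Real.pi) (hO1 : 0 < O) (hO2 : O ≤ Real.pi/2)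
    (hO1' : 0 < O') (hO2' : O' ≤ Real.pi/2) : -1 < Ej ∧ Ej < X + 1 := by
  have hπ := Real.pi_pos
  constructor
  · nlinarith
  · nlinarith

theorem stmt_11 (k₂ h α l L k : ℝ)
    (hk₂ : 0 < k₂) (hh : 0 < h) (hα : 0 < α) (hl : 0 < l) (hk : 0 < k) (hlL : l < L) :
    {x : ℝ | 0 < x ∧ Real.cos (α * l * x) ≠ 0 ∧ Real.cos ((L - l) * x) ≠ 0 ∧
        k * α - Real.tan (α * l * x) * Real.tan ((L - l) * x) ≠ 0 ∧
        -(k₂ / h) * x =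
          (Real.tan (α * l * x) + k * α * Real.tan ((L - l) * x)) /
            (k * α - Real.tan (α * l * x) * Real.tan ((L - l) * x))}.Infinite := by
  have hπ := Real.pi_pos
  set c := k₂ / h with hc_def
  set u := α * l with hu_def
  set v := L - l with hv_def
  set m := k * α with hm_def
  have hu : 0 < u := mul_pos hα hl
  have hv : 0 < v := sub_pos.mpr hlL
  have hm : 0 < m := mul_pos hk hα
  have hc : 0 < c := div_pos hk₂ hh
  have hw : 0 < u + v := by linarith
  have hm1 : 0 < min m 1 := lt_min hm one_pos
  by_contra hinf
  rw [Set.not_infinite] at hinf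
  obtain ⟨X, hX⟩ := hinf.bddAbove
  set X₀ := max X ((1+m)/(c*min m 1) + 1) with hX₀_def
  have hX₀X : X ≤ X₀ := le_max_left _ _
  have hX₀m : (1+m)/(c*min m 1) < X₀ := by
    have := le_max_right X ((1+m)/(c*min m 1) + 1)
    linarith
  have hX₀pos : 0 < X₀ := lt_of_le_of_lt (by positivity) hX₀m
  set N := ⌈X₀*(u+v)/(2*π)⌉₊ + 1 with hN_def
  have hAN : ∀ n : ℕ, N ≤ n → X₀ < 2*n*π/(u+v) := by
    intro n hn
    rw [lt_div_iff₀ hw]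
    have h1 : X₀*(u+v)/(2*π) < (n:ℝ) := by
      have h2 : (N:ℝ) ≤ (n:ℝ) := Nat.cast_le.mpr hn
      have h3 : X₀*(u+v)/(2*π) ≤ (⌈X₀*(u+v)/(2*π)⌉₊ : ℝ) := Nat.le_ceil _
      have h4 : (N:ℝ) = (⌈X₀*(u+v)/(2*π)⌉₊ : ℝ) + 1 := by rw [hN_def]; push_cast; ring
      linarith
    calc X₀*(u+v) = X₀*(u+v)/(2*π)*(2*π) := by field_simp
      _ < (n:ℝ)*(2*π) := by
          apply mul_lt_mul_of_pos_right h1; linarith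
      _ = 2*(n:ℝ)*π := by ring
  have hbig : ∀ n : ℕ, N ≤ n → (1+m) < c * (2*n*π/(u+v)) * min m 1 := by
    intro n hn
    have h1 := hAN n hn
    have h2 : (1+m) < X₀*(c*min m 1) := by
      rw [div_lt_iff₀ (by positivity)] at hX₀m; linarith
    have h3 : X₀*(c*min m 1) ≤ (2*n*π/(u+v))*(c*min m 1) := by
      apply mul_le_mul_of_nonneg_right h1.le (by positivity)
    calc (1+m) < X₀*(c*min m 1) := h2
      _ ≤ (2*n*π/(u+v))*(c*min m 1) := h3
      _ = c * (2*n*π/(u+v)) * min m 1 := by ring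
  have hex : ∀ n : ℕ, ∃ z, N ≤ n →
      z ∈ Set.Ioo (2*n*π/(u+v)) ((2*n+1)*π/(u+v)) ∧ Hfun u v m c z = 0 := by
    intro n
    by_cases hn : N ≤ n
    · obtain ⟨z, hz1, hz2⟩ := ivt_zero u v m c hu hv hm hc n (hbig n hn)
      exact ⟨z, fun _ => ⟨hz1, hz2⟩⟩
    · exact ⟨0, fun hh' => absurd hh' hn⟩
  choose z hz using hex
  have hzA : ∀ n : ℕ, N ≤ n → 2*n*π/(u+v) < z n := fun n hn => ((hz n hn).1).1
  have hzB : ∀ n : ℕ, N ≤ n → z n < (2*n+1)*π/(u+v) := fun n hn => ((hz n hn).1).2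
  have hzH : ∀ n : ℕ, N ≤ n → Hfun u v m c (z n) = 0 := fun n hn => (hz n hn).2
  have hzX₀ : ∀ n : ℕ, N ≤ n → X₀ < z n := fun n hn => lt_trans (hAN n hn) (hzA n hn)
  have hz0 : ∀ n : ℕ, N ≤ n → 0 < z n := fun n hn => lt_trans hX₀pos (hzX₀ n hn)
  have hzc : ∀ n : ℕ, N ≤ n → 0 < c * z n := fun n hn => mul_pos hc (hz0 n hn)
  -- badness
  have hbad : ∀ n : ℕ, N ≤ n →
      Real.cos (u * z n) = 0 ∨ (Real.cos (u * z n) ≠ 0 ∧ Real.cos (v * z n) = 0) := by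
    intro n hn
    by_cases h1 : Real.cos (u * z n) = 0
    · exact Or.inl h1
    · refine Or.inr ⟨h1, ?_⟩
      by_contra h2
      obtain ⟨hd, heq⟩ := good_zero u v m c (z n) hm (hzH n hn) h1 h2
      have hmem : z n ∈ {x : ℝ | 0 < x ∧ Real.cos (u*x) ≠ 0 ∧ Real.cos (v*x) ≠ 0 ∧
          m - Real.tan (u*x) * Real.tan (v*x) ≠ 0 ∧
          -c * x = (Real.tan (u*x) + m * Real.tan (v*x)) /
            (m - Real.tan (u*x) * Real.tan (v*x))} :=
        ⟨hz0 n hn, h1, h2, hd, heq⟩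
      have := hX hmem
      have := hzX₀ n hn
      linarith
  -- classification
  have hex2 : ∀ n : ℕ, ∃ (t : Bool) (A B : ℤ), N ≤ n →
      (u * z n = A*π + (if t then π/2 else Real.arctan (m/(c*z n)))) ∧
      (v * z n = B*π + (if t then Real.arctan (1/(c*z n)) else π/2)) := by
    intro n
    by_cases hn : N ≤ n
    · rcases hbad n hn with h1 | ⟨h1, h2⟩
      · obtain ⟨A, hA⟩ := Real.cos_eq_zero_iff.mp h1
        obtain ⟨B, hB⟩ := bad_u u v m c (z n) (hzc n hn) (hzH n hn) h1
        refine ⟨true, A, B, fun _ => ⟨?_, ?_⟩⟩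
        · rw [hA, if_pos rfl]; push_cast; ring
        · simpa using hB
      · obtain ⟨B, hB⟩ := Real.cos_eq_zero_iff.mp h2
        obtain ⟨A, hA⟩ := bad_v u v m c (z n) (hzc n hn) hm (hzH n hn) h2
        refine ⟨false, A, B, fun _ => ⟨?_, ?_⟩⟩
        · simpa using hA
        · rw [hB, if_neg Bool.false_ne_true]; push_cast; ring
    · exact ⟨true, 0, 0, fun hh' => absurd hh' hn⟩
  choose tb AA BB hAB using hex2
  have hta : ∀ n : ℕ, N ≤ n →
      u * z n = AA n * π + (if tb n then π/2 else Real.arctan (m/(c*z n))) :=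
    fun n hn => (hAB n hn).1
  have htb : ∀ n : ℕ, N ≤ n →
      v * z n = BB n * π + (if tb n then Real.arctan (1/(c*z n)) else π/2) :=
    fun n hn => (hAB n hn).2
  -- offset bounds
  have hof : ∀ (b : Bool) (y : ℝ), 0 < y →
      (0 < (if b then π/2 else Real.arctan y) ∧ (if b then π/2 else Real.arctan y) ≤ π/2) := by
    intro b y hy
    cases b
    · rw [if_neg Bool.false_ne_true]
      exact ⟨arctan_pos' hy, (Real.arctan_lt_pi_div_two y).le⟩
    · rw [if_pos rfl]
      exact ⟨by linarith, le_refl _⟩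
  have hofa : ∀ n : ℕ, N ≤ n →
      0 < (if tb n then π/2 else Real.arctan (m/(c*z n))) ∧
      (if tb n then π/2 else Real.arctan (m/(c*z n))) ≤ π/2 :=
    fun n hn => hof (tb n) _ (by have := hzc n hn; positivity)
  have hofb : ∀ n : ℕ, N ≤ n →
      0 < (if tb n then Real.arctan (1/(c*z n)) else π/2) ∧
      (if tb n then Real.arctan (1/(c*z n)) else π/2) ≤ π/2 := by
    intro n hn
    cases htn : tb n
    · rw [if_neg Bool.false_ne_true]
      exact ⟨by linarith, le_refl _⟩
    · rw [if_pos rfl]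
      have h0 : (0:ℝ) < 1/(c*z n) := by
        have := hzc n hn; positivity
      exact ⟨arctan_pos' h0, (Real.arctan_lt_pi_div_two _).le⟩
  -- gaps
  have hgap : ∀ n : ℕ, N ≤ n →
      π/(u+v) < z (n+1) - z n ∧ z (n+1) - z n < 3*π/(u+v) := by
    intro n hn
    have hn1 : N ≤ n+1 := le_trans hn (Nat.le_succ n)
    have h1 := hzB n hn
    have h2 := hzA (n+1) hn1
    have h3 := hzA n hn
    have h4 := hzB (n+1) hn1
    constructor
    · have e : (2*((n:ℝ)+1))*π/(u+v) - (2*(n:ℝ)+1)*π/(u+v) = π/(u+v) := by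
        field_simp; ring
      have h2' : 2*((n:ℝ)+1)*π/(u+v) < z (n+1) := by
        have : ((n:ℝ)+1) = ((n+1 : ℕ) : ℝ) := by push_cast; ring
        rw [this]; exact h2
      linarith
    · have e : (2*((n:ℝ)+1)+1)*π/(u+v) - 2*(n:ℝ)*π/(u+v) = 3*π/(u+v) := by
        field_simp; ring
      have h4' : z (n+1) < (2*((n:ℝ)+1)+1)*π/(u+v) := by
        have : ((n:ℝ)+1) = ((n+1 : ℕ) : ℝ) := by push_cast; ring
        rw [this]; exact h4
      linarith
  -- integer jump bounds
  have hPQ : ∀ n : ℕ, N ≤ n →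
      (0 ≤ AA (n+1) - AA n ∧ AA (n+1) - AA n ≤ ⌈3*u/(u+v)⌉ + 1) ∧
      (0 ≤ BB (n+1) - BB n ∧ BB (n+1) - BB n ≤ ⌈3*v/(u+v)⌉ + 1) := by
    intro n hn
    have hn1 : N ≤ n+1 := le_trans hn (Nat.le_succ n)
    have ea := hta n hn
    have ea' := hta (n+1) hn1
    have eb := htb n hn
    have eb' := htb (n+1) hn1
    have hOa := hofa n hn
    have hOa' := hofa (n+1) hn1
    have hOb := hofb n hn
    have hOb' := hofb (n+1) hn1
    obtain ⟨hg1, hg2⟩ := hgap n hn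
    have keyA : ((AA (n+1) : ℝ) - AA n)*π = u*(z (n+1) - z n)
        - (if tb (n+1) then π/2 else Real.arctan (m/(c*z (n+1))))
        + (if tb n then π/2 else Real.arctan (m/(c*z n))) := by linarith
    have keyB : ((BB (n+1) : ℝ) - BB n)*π = v*(z (n+1) - z n)
        - (if tb (n+1) then Real.arctan (1/(c*z (n+1))) else π/2)
        + (if tb n then Real.arctan (1/(c*z n)) else π/2) := by linarith
    have hgu1 : 0 < u*(z (n+1) - z n) := by
      have : (0:ℝ) < π/(u+v) := by positivity
      apply mul_pos hu; linarith
    have hgu2 : u*(z (n+1) - z n) < u*(3*π/(u+v)) := mul_lt_mul_of_pos_left hg2 hu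
    have hgv1 : 0 < v*(z (n+1) - z n) := by
      have : (0:ℝ) < π/(u+v) := by positivity
      apply mul_pos hv; linarith
    have hgv2 : v*(z (n+1) - z n) < v*(3*π/(u+v)) := mul_lt_mul_of_pos_left hg2 hv
    have hceilu : 3*u/(u+v) ≤ (⌈3*u/(u+v)⌉ : ℝ) := Int.le_ceil _
    have hceilv : 3*v/(u+v) ≤ (⌈3*v/(u+v)⌉ : ℝ) := Int.le_ceil _
    have h5u : u*(3*π/(u+v)) = (3*u/(u+v))*π := by field_simp
    have h5v : v*(3*π/(u+v)) = (3*v/(u+v))*π := by field_simp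
    obtain ⟨hA1, hA2'⟩ := jump_bound keyA hgu1 (h5u ▸ hgu2) hOa.1 hOa.2 hOa'.1 hOa'.2
    obtain ⟨hB1, hB2'⟩ := jump_bound keyB hgv1 (h5v ▸ hgv2) hOb.1 hOb.2 hOb'.1 hOb'.2
    have hA2 : ((AA (n+1) : ℝ) - AA n) < (⌈3*u/(u+v)⌉ : ℝ) + 1 := by linarith
    have hB2 : ((BB (n+1) : ℝ) - BB n) < (⌈3*v/(u+v)⌉ : ℝ) + 1 := by linarith
    constructor
    · constructor
      · have : (-1 : ℤ) < AA (n+1) - AA n := by exact_mod_cast hA1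
        omega
      · have : ((AA (n+1) - AA n : ℤ) : ℝ) < ((⌈3*u/(u+v)⌉ + 1 : ℤ) : ℝ) := by push_cast; linarith
        have := Int.cast_lt.mp this
        omega
    · constructor
      · have : (-1 : ℤ) < BB (n+1) - BB n := by exact_mod_cast hB1
        omega
      · have : ((BB (n+1) - BB n : ℤ) : ℝ) < ((⌈3*v/(u+v)⌉ + 1 : ℤ) : ℝ) := by push_cast; linarith
        have := Int.cast_lt.mp this
        omega
  -- pigeonhole
  have hpick : ∃ y : ℤ × ℤ × Bool × Bool,
      {n : ℕ | N ≤ n ∧ (AA (n+1) - AA n, BB (n+1) - BB n, tb n, tb (n+1)) = y}.Infinite := by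
    by_contra hcon
    push_neg at hcon
    have hfinbox : ((Set.Icc (0:ℤ) (⌈3*u/(u+v)⌉ + 1)) ×ˢ ((Set.Icc (0:ℤ) (⌈3*v/(u+v)⌉ + 1)) ×ˢ
        (Set.univ : Set (Bool × Bool)))).Finite :=
      (Set.finite_Icc _ _).prod ((Set.finite_Icc _ _).prod (Set.finite_univ))
    have hcover : Set.Ici N ⊆ ⋃ y ∈ ((Set.Icc (0:ℤ) (⌈3*u/(u+v)⌉ + 1)) ×ˢ
        ((Set.Icc (0:ℤ) (⌈3*v/(u+v)⌉ + 1)) ×ˢ (Set.univ : Set (Bool × Bool)))),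
        {n : ℕ | N ≤ n ∧ (AA (n+1) - AA n, BB (n+1) - BB n, tb n, tb (n+1)) = y} := by
      intro n hn
      have hn' : N ≤ n := hn
      obtain ⟨⟨hp1, hp2⟩, ⟨hq1, hq2⟩⟩ := hPQ n hn'
      exact Set.mem_biUnion ⟨⟨hp1, hp2⟩, ⟨hq1, hq2⟩, Set.mem_univ _⟩ ⟨hn', rfl⟩
    have hfin2 : (⋃ y ∈ ((Set.Icc (0:ℤ) (⌈3*u/(u+v)⌉ + 1)) ×ˢ
        ((Set.Icc (0:ℤ) (⌈3*v/(u+v)⌉ + 1)) ×ˢ (Set.univ : Set (Bool × Bool)))),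
        {n : ℕ | N ≤ n ∧ (AA (n+1) - AA n, BB (n+1) - BB n, tb n, tb (n+1)) = y}).Finite :=
      hfinbox.biUnion (fun y _ => hcon y)
    exact (Set.Ici_infinite N) (hfin2.subset hcover)
  obtain ⟨⟨P₀, Q₀, t₁, t₂⟩, hI⟩ := hpick
  -- membership data extraction
  have hIdata : ∀ n, n ∈ {n : ℕ | N ≤ n ∧ (AA (n+1) - AA n, BB (n+1) - BB n, tb n, tb (n+1)) = (P₀, Q₀, t₁, t₂)} →
      N ≤ n ∧ AA (n+1) - AA n = P₀ ∧ BB (n+1) - BB n = Q₀ ∧ tb n = t₁ ∧ tb (n+1) = t₂ := by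
    intro n hn
    obtain ⟨hn1, hn2⟩ := hn
    rw [Prod.ext_iff, Prod.ext_iff, Prod.ext_iff] at hn2
    exact ⟨hn1, hn2.1, hn2.2.1, hn2.2.2.1, hn2.2.2.2⟩
  -- the constant identity
  have hE : ∀ n, n ∈ {n : ℕ | N ≤ n ∧ (AA (n+1) - AA n, BB (n+1) - BB n, tb n, tb (n+1)) = (P₀, Q₀, t₁, t₂)} →
      v*(if tb (n+1) then π/2 else Real.arctan (m/(c*z (n+1))))
      - v*(if tb n then π/2 else Real.arctan (m/(c*z n)))
      - u*(if tb (n+1) then Real.arctan (1/(c*z (n+1))) else π/2)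
      + u*(if tb n then Real.arctan (1/(c*z n)) else π/2)
      = (u*(Q₀:ℝ) - v*(P₀:ℝ))*π := by
    intro n hn
    obtain ⟨hn1, eP, eQ, et, et'⟩ := hIdata n hn
    have hn1' : N ≤ n+1 := le_trans hn1 (Nat.le_succ n)
    have ea := hta n hn1
    have ea' := hta (n+1) hn1'
    have eb := htb n hn1
    have eb' := htb (n+1) hn1'
    have ePr : (AA (n+1) : ℝ) - AA n = (P₀ : ℝ) := by exact_mod_cast congrArg (Int.cast : ℤ → ℝ) eP
    have eQr : (BB (n+1) : ℝ) - BB n = (Q₀ : ℝ) := by exact_mod_cast congrArg (Int.cast : ℤ → ℝ) eQ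
    linear_combination -v*ea' + v*ea + u*eb' - u*eb - v*π*ePr + u*π*eQr
  -- final contradiction machine
  have final : ∀ (V : ℕ → ℝ) (Cst : ℝ),
      (∀ n ∈ {n : ℕ | N ≤ n ∧ (AA (n+1) - AA n, BB (n+1) - BB n, tb n, tb (n+1)) = (P₀, Q₀, t₁, t₂)}, V n = Cst) →
      (∀ n ∈ {n : ℕ | N ≤ n ∧ (AA (n+1) - AA n, BB (n+1) - BB n, tb n, tb (n+1)) = (P₀, Q₀, t₁, t₂)}, 0 < V n) →
      (∀ n ∈ {n : ℕ | N ≤ n ∧ (AA (n+1) - AA n, BB (n+1) - BB n, tb n, tb (n+1)) = (P₀, Q₀, t₁, t₂)}, V n ≤ (u + v*m)/c / z n) →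
      False := by
    intro V Cst hval hpos hbnd
    obtain ⟨n₀, hn₀⟩ := hI.nonempty
    have hκ : 0 < Cst := (hval n₀ hn₀) ▸ hpos n₀ hn₀
    obtain ⟨b, hbI, hbgt⟩ := hI.exists_gt (⌈((u + v*m)/c/Cst)*(u+v)/(2*π)⌉₊ + N)
    have hbN : N ≤ b := le_trans (Nat.le_add_left N _) hbgt.le
    have hzb : (u + v*m)/c/Cst < z b := by
      have h1 : (⌈((u + v*m)/c/Cst)*(u+v)/(2*π)⌉₊ : ℝ) < (b:ℝ) := by
        exact_mod_cast lt_of_le_of_lt (Nat.le_add_right _ N) hbgt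
      have h2 : ((u + v*m)/c/Cst)*(u+v)/(2*π) ≤ (⌈((u + v*m)/c/Cst)*(u+v)/(2*π)⌉₊ : ℝ) := Nat.le_ceil _
      have h3 : ((u + v*m)/c/Cst)*(u+v)/(2*π) < (b:ℝ) := lt_of_le_of_lt h2 h1
      have h4 : (u + v*m)/c/Cst < 2*b*π/(u+v) := by
        rw [div_lt_iff₀ (by positivity : (0:ℝ) < 2*π)] at h3
        rw [lt_div_iff₀ hw]
        nlinarith
      exact lt_trans h4 (hzA b hbN)
    have h5 : (u + v*m)/c / z b < Cst := by
      rw [div_lt_iff₀ (hz0 b hbN)]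
      rw [div_lt_iff₀ hκ] at hzb
      nlinarith
    have := hbnd b hbI
    have := hval b hbI
    linarith
  -- helper bounds for arctan terms
  have harc1 : ∀ n : ℕ, N ≤ n → Real.arctan (1/(c*z n)) ≤ 1/c/z n := by
    intro n hn
    have h0 : (0:ℝ) < 1/(c*z n) := by have := hzc n hn; positivity
    have := (arctan_lt_self' h0).le
    calc Real.arctan (1/(c*z n)) ≤ 1/(c*z n) := this
      _ = 1/c/z n := (div_div 1 c (z n)).symm
  have harc2 : ∀ n : ℕ, N ≤ n → Real.arctan (m/(c*z n)) ≤ m/c/z n := by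
    intro n hn
    have h0 : (0:ℝ) < m/(c*z n) := by have := hzc n hn; positivity
    have := (arctan_lt_self' h0).le
    calc Real.arctan (m/(c*z n)) ≤ m/(c*z n) := this
      _ = m/c/z n := (div_div m c (z n)).symm
  have hzmono : ∀ n : ℕ, N ≤ n → z n < z (n+1) := by
    intro n hn
    have := (hgap n hn).1
    have h0 : (0:ℝ) < π/(u+v) := by positivity
    linarith
  have harcmono : ∀ n : ℕ, N ≤ n →
      Real.arctan (1/(c*z (n+1))) < Real.arctan (1/(c*z n)) ∧
      Real.arctan (m/(c*z (n+1))) < Real.arctan (m/(c*z n)) := by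
    intro n hn
    have h1 := hzmono n hn
    have h2 := hz0 n hn
    have hlt : c * z n < c * z (n+1) := mul_lt_mul_of_pos_left h1 hc
    have hpos1 : 0 < c * z n := hzc n hn
    constructor
    · exact Real.arctan_strictMono (by
        apply div_lt_div_of_pos_left one_pos hpos1 hlt)
    · exact Real.arctan_strictMono (by
        apply div_lt_div_of_pos_left hm hpos1 hlt)
  -- scaled bounds bundle
  have hS : ∀ n : ℕ, N ≤ n →
      (u*Real.arctan (1/(c*z n)) ≤ u/(c*z n) ∧ u*Real.arctan (1/(c*z (n+1))) ≤ u/(c*z n)) ∧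
      (v*Real.arctan (m/(c*z n)) ≤ v*m/(c*z n) ∧ v*Real.arctan (m/(c*z (n+1))) ≤ v*m/(c*z n)) ∧
      ((u+v*m)/c/z n = u/(c*z n) + v*m/(c*z n)) ∧ (0 < u/(c*z n) ∧ 0 < v*m/(c*z n)) := by
    intro n hn
    have hn1 : N ≤ n+1 := le_trans hn (Nat.le_succ n)
    have hcz := hzc n hn
    have hcz' := hzc (n+1) hn1
    have hle : c*z n ≤ c*z (n+1) := by
      have := hzmono n hn
      nlinarith
    have a1 : Real.arctan (1/(c*z n)) ≤ 1/(c*z n) := (arctan_lt_self' (by positivity)).le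
    have a1' : Real.arctan (1/(c*z (n+1))) ≤ 1/(c*z n) := by
      have h1 : Real.arctan (1/(c*z (n+1))) ≤ 1/(c*z (n+1)) := (arctan_lt_self' (by positivity)).le
      have h2 : 1/(c*z (n+1)) ≤ 1/(c*z n) := one_div_le_one_div_of_le hcz hle
      linarith
    have a2 : Real.arctan (m/(c*z n)) ≤ m/(c*z n) := (arctan_lt_self' (by positivity)).le
    have a2' : Real.arctan (m/(c*z (n+1))) ≤ m/(c*z n) := by
      have h1 : Real.arctan (m/(c*z (n+1))) ≤ m/(c*z (n+1)) := (arctan_lt_self' (by positivity)).le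
      have h2 : m/(c*z (n+1)) ≤ m/(c*z n) := by
        apply div_le_div_of_nonneg_left hm.le hcz hle
      linarith
    refine ⟨⟨?_, ?_⟩, ⟨?_, ?_⟩, ?_, ?_, ?_⟩
    · calc u*Real.arctan (1/(c*z n)) ≤ u*(1/(c*z n)) := by
            exact mul_le_mul_of_nonneg_left a1 hu.le
        _ = u/(c*z n) := by rw [mul_one_div]
    · calc u*Real.arctan (1/(c*z (n+1))) ≤ u*(1/(c*z n)) := by
            exact mul_le_mul_of_nonneg_left a1' hu.le
        _ = u/(c*z n) := by rw [mul_one_div]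
    · calc v*Real.arctan (m/(c*z n)) ≤ v*(m/(c*z n)) := by
            exact mul_le_mul_of_nonneg_left a2 hv.le
        _ = v*m/(c*z n) := by ring
    · calc v*Real.arctan (m/(c*z (n+1))) ≤ v*(m/(c*z n)) := by
            exact mul_le_mul_of_nonneg_left a2' hv.le
        _ = v*m/(c*z n) := by ring
    · rw [div_div, add_div]
    · positivity
    · positivity
  have hP : ∀ n : ℕ, N ≤ n →
      0 < u*Real.arctan (1/(c*z n)) ∧ 0 < v*Real.arctan (m/(c*z n)) := by
    intro n hn
    have hcz := hzc n hn
    constructor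
    · exact mul_pos hu (arctan_pos' (by positivity))
    · exact mul_pos hv (arctan_pos' (by positivity))
  -- case analysis on the pattern
  cases t₁ <;> cases t₂
  · -- (false,false) : both type v
    apply final (fun n => v*(Real.arctan (m/(c*z n)) - Real.arctan (m/(c*z (n+1)))))
        (-((u*(Q₀:ℝ) - v*(P₀:ℝ))*π))
    · intro n hn
      obtain ⟨hn1, _, _, et, et'⟩ := hIdata n hn
      have hEn := hE n hn
      rw [et, et'] at hEn
      simp only [Bool.false_eq_true, if_false] at hEn
      linarith
    · intro n hn
      obtain ⟨hn1, _, _, _, _⟩ := hIdata n hn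
      exact mul_pos hv (sub_pos.mpr (harcmono n hn1).2)
    · intro n hn
      obtain ⟨hn1, _, _, _, _⟩ := hIdata n hn
      obtain ⟨⟨s1, s1'⟩, ⟨s2, s2'⟩, edenom, q1, q2⟩ := hS n hn1
      have hp' := (hP (n+1) (le_trans hn1 (Nat.le_succ n))).2
      have expand : v*(Real.arctan (m/(c*z n)) - Real.arctan (m/(c*z (n+1))))
          = v*Real.arctan (m/(c*z n)) - v*Real.arctan (m/(c*z (n+1))) := by ring
      rw [expand]
      linarith
  · -- (false,true) : type v then type u
    apply final (fun n => v*Real.arctan (m/(c*z n)) + u*Real.arctan (1/(c*z (n+1))))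
        ((u+v)*(π/2) - (u*(Q₀:ℝ) - v*(P₀:ℝ))*π)
    · intro n hn
      obtain ⟨hn1, _, _, et, et'⟩ := hIdata n hn
      have hEn := hE n hn
      rw [et, et'] at hEn
      simp only [Bool.false_eq_true, if_false, if_true] at hEn
      linarith
    · intro n hn
      obtain ⟨hn1, _, _, _, _⟩ := hIdata n hn
      have h1 := (hP n hn1).2
      have hcz' := hzc (n+1) (le_trans hn1 (Nat.le_succ n))
      have h2 : 0 < u*Real.arctan (1/(c*z (n+1))) :=
        mul_pos hu (arctan_pos' (by positivity))
      linarith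
    · intro n hn
      obtain ⟨hn1, _, _, _, _⟩ := hIdata n hn
      obtain ⟨⟨s1, s1'⟩, ⟨s2, s2'⟩, edenom, q1, q2⟩ := hS n hn1
      linarith
  · -- (true,false) : type u then type v
    apply final (fun n => u*Real.arctan (1/(c*z n)) + v*Real.arctan (m/(c*z (n+1))))
        ((u+v)*(π/2) + (u*(Q₀:ℝ) - v*(P₀:ℝ))*π)
    · intro n hn
      obtain ⟨hn1, _, _, et, et'⟩ := hIdata n hn
      have hEn := hE n hn
      rw [et, et'] at hEn
      simp only [Bool.false_eq_true, if_false, if_true] at hEn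
      linarith
    · intro n hn
      obtain ⟨hn1, _, _, _, _⟩ := hIdata n hn
      have h1 := (hP n hn1).1
      have hcz' := hzc (n+1) (le_trans hn1 (Nat.le_succ n))
      have h2 : 0 < v*Real.arctan (m/(c*z (n+1))) :=
        mul_pos hv (arctan_pos' (by positivity))
      linarith
    · intro n hn
      obtain ⟨hn1, _, _, _, _⟩ := hIdata n hn
      obtain ⟨⟨s1, s1'⟩, ⟨s2, s2'⟩, edenom, q1, q2⟩ := hS n hn1
      linarith
  · -- (true,true) : both type u
    apply final (fun n => u*(Real.arctan (1/(c*z n)) - Real.arctan (1/(c*z (n+1)))))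
        ((u*(Q₀:ℝ) - v*(P₀:ℝ))*π)
    · intro n hn
      obtain ⟨hn1, _, _, et, et'⟩ := hIdata n hn
      have hEn := hE n hn
      rw [et, et'] at hEn
      simp only [if_true] at hEn
      linarith
    · intro n hn
      obtain ⟨hn1, _, _, _, _⟩ := hIdata n hn
      exact mul_pos hu (sub_pos.mpr (harcmono n hn1).1)
    · intro n hn
      obtain ⟨hn1, _, _, _, _⟩ := hIdata n hn
      obtain ⟨⟨s1, s1'⟩, ⟨s2, s2'⟩, edenom, q1, q2⟩ := hS n hn1
      have hp' := mul_pos hu (arctan_pos'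
        (show (0:ℝ) < 1/(c*z (n+1)) by
          have := hzc (n+1) (le_trans hn1 (Nat.le_succ n)); positivity))
      have expand : u*(Real.arctan (1/(c*z n)) - Real.arctan (1/(c*z (n+1))))
          = u*Real.arctan (1/(c*z n)) - u*Real.arctan (1/(c*z (n+1))) := by ring
      rw [expand]
      linarith
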